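/- Let α > 0, γ := 2α + 1, let I ⊆ ℝ be an open interval, and let w, z, k : ℝ² → ℝ be twice continuously differentiable on ℝ × I, satisfy the Riemann system there, and satisfy σ := (w−z)/2 > 0 on ℝ × I. Let η : ℝ² → ℝ be twice continuously differentiable on ℝ × I with ∂_t η(x,t) = λ₃(η(x,t), t) for all (x,t) ∈ ℝ × I. Then with Σ(x,t) := σ(η(x,t),t), W̊(x,t) := ẘ(η(x,t),t), Z̊(x,t) := z̊(η(x,t),t), K̊(x,t) := k̊(η(x,t),t) and η_x := ∂_x η, the following identities hold on ℝ × I: (1) ∂_t Σ = −α Σ Z̊ + (α/(2γ)) Σ² K̊; (2) ∂_x Σ = (1/2) η_x W̊ − (1/2) η_x Z̊ + (1/(2γ)) η_x Σ K̊; (3) ∂_t (Σ⁻¹) = α Σ⁻¹ Z̊ − (α/(2γ)) K̊; (4) ∂_t ∂_x η = (1+α)/2 · η_x W̊ + (1−α)/2 · η_x Z̊ + (α/(2γ)) η_x Σ K̊; (5) ∂_t (η_x W̊) = (α/(4γ)) Σ K̊ (η_x W̊ + η_x Z̊); (6) η_x ∂_t K̊ = α Σ ∂_x K̊ − (1/2)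 K̊ η_x W̊ − (1/2) η_x K̊ Z̊; (7) η_x ∂_t Z̊ = 2α Σ ∂_x Z̊ − (1−α)/2 · η_x W̊ Z̊ − (α/(4γ)) Σ K̊ η_x W̊ − (1+α)/2 · η_x Z̊² + (α/(4γ)) η_x Σ K̊ Z̊. -/

import Mathlib

set_option maxHeartbeats 2000000


/-- Partial derivative in the first variable of a function on `ℝ × ℝ`. -/
noncomputable def pdx (f : ℝ × ℝ → ℝ) (p : ℝ × ℝ) : ℝ := fderiv ℝ f p (1, 0)

/-- Partial derivative in the second (time) variable of a function on `ℝ × ℝ`. -/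
noncomputable def pdt (f : ℝ × ℝ → ℝ) (p : ℝ × ℝ) : ℝ := fderiv ℝ f p (0, 1)

section helpers
variable {f g η : ℝ × ℝ → ℝ} {x p : ℝ × ℝ} {v : ℝ × ℝ}

lemma pd_add (hf : DifferentiableAt ℝ f x) (hg : DifferentiableAt ℝ g x) :
    fderiv ℝ (fun y => f y + g y) x v = fderiv ℝ f x v + fderiv ℝ g x v := by
  rw [fderiv_fun_add hf hg]; rfl

lemma pd_sub (hf : DifferentiableAt ℝ f x) (hg : DifferentiableAt ℝ g x) :
    fderiv ℝ (fun y => f y - g y) x v = fderiv ℝ f x v - fderiv ℝ g x v := by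
  rw [fderiv_fun_sub hf hg]; rfl

lemma pd_neg : fderiv ℝ (fun y => -(f y)) x v = -(fderiv ℝ f x v) := by
  rw [fderiv_fun_neg]; rfl

lemma pd_mul (hf : DifferentiableAt ℝ f x) (hg : DifferentiableAt ℝ g x) :
    fderiv ℝ (fun y => f y * g y) x v = fderiv ℝ f x v * g x + f x * fderiv ℝ g x v := by
  rw [fderiv_fun_mul hf hg]; simp [mul_comm]; ring

lemma pd_const_mul (hf : DifferentiableAt ℝ f x) (c : ℝ) :
    fderiv ℝ (fun y => c * f y) x v = c * fderiv ℝ f x v := by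
  rw [fderiv_const_mul hf c]; simp

lemma pd_div_const (hf : DifferentiableAt ℝ f x) (c : ℝ) :
    fderiv ℝ (fun y => f y / c) x v = fderiv ℝ f x v / c := by
  have h : (fun y => f y / c) = fun y => c⁻¹ * f y := by ext y; ring
  rw [h, pd_const_mul hf c⁻¹, inv_mul_eq_div]

lemma pd_sq (hf : DifferentiableAt ℝ f x) :
    fderiv ℝ (fun y => f y ^ 2) x v = 2 * f x * fderiv ℝ f x v := by
  have h : (fun y => f y ^ 2) = fun y => f y * f y := by ext y; ring
  rw [h, pd_mul hf hf]; ring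

lemma hasFDerivAt_comp2 (hf : DifferentiableAt ℝ f (η p, p.2))
    (hη : DifferentiableAt ℝ η p) :
    HasFDerivAt (fun q => f (η q, q.2))
      ((fderiv ℝ f (η p, p.2)).comp ((fderiv ℝ η p).prod (ContinuousLinearMap.snd ℝ ℝ ℝ))) p := by
  have hG : HasFDerivAt (fun q : ℝ × ℝ => (η q, q.2))
      ((fderiv ℝ η p).prod (ContinuousLinearMap.snd ℝ ℝ ℝ)) p :=
    hη.hasFDerivAt.prodMk (hasFDerivAt_snd)
  exact hf.hasFDerivAt.comp p hG

lemma diff_comp2 (hf : DifferentiableAt ℝ f (η p, p.2)) (hη : DifferentiableAt ℝ η p) :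
    DifferentiableAt ℝ (fun q => f (η q, q.2)) p :=
  (hasFDerivAt_comp2 hf hη).differentiableAt

lemma pdx_comp2 (hf : DifferentiableAt ℝ f (η p, p.2)) (hη : DifferentiableAt ℝ η p) :
    pdx (fun q => f (η q, q.2)) p = pdx f (η p, p.2) * pdx η p := by
  have h := (hasFDerivAt_comp2 hf hη).fderiv
  simp only [pdx, h, ContinuousLinearMap.comp_apply, ContinuousLinearMap.prod_apply,
    ContinuousLinearMap.coe_snd']
  have hv : (fderiv ℝ η p (1, 0), ((1:ℝ),(0:ℝ)).2) = (fderiv ℝ η p (1,0)) • ((1:ℝ),(0:ℝ)) := by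
    simp [Prod.smul_def]
  rw [hv, map_smul]
  simp [mul_comm]

lemma pdt_comp2 (hf : DifferentiableAt ℝ f (η p, p.2)) (hη : DifferentiableAt ℝ η p) :
    pdt (fun q => f (η q, q.2)) p = pdx f (η p, p.2) * pdt η p + pdt f (η p, p.2) := by
  have h := (hasFDerivAt_comp2 hf hη).fderiv
  simp only [pdt, pdx, h, ContinuousLinearMap.comp_apply, ContinuousLinearMap.prod_apply,
    ContinuousLinearMap.coe_snd']
  have hv : (fderiv ℝ η p (0, 1), ((0:ℝ),(1:ℝ)).2)
      = (fderiv ℝ η p (0,1)) • ((1:ℝ),(0:ℝ)) + ((0:ℝ),(1:ℝ)) := by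
    simp [Prod.smul_def]
  rw [hv, map_add, map_smul]
  simp [mul_comm]

lemma hasFDerivAt_pd (hf : ContDiffAt ℝ 2 f x) (v : ℝ × ℝ) :
    HasFDerivAt (fun y => fderiv ℝ f y v)
      ((ContinuousLinearMap.apply ℝ ℝ v).comp (fderiv ℝ (fderiv ℝ f) x)) x := by
  have h1 : DifferentiableAt ℝ (fderiv ℝ f) x :=
    (hf.fderiv_right (m := 1) (by norm_num)).differentiableAt (by norm_num)
  exact ((ContinuousLinearMap.apply ℝ ℝ v).hasFDerivAt).comp x h1.hasFDerivAt

lemma diff_pdx (hf : ContDiffAt ℝ 2 f x) : DifferentiableAt ℝ (pdx f) x :=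
  (hasFDerivAt_pd hf (1,0)).differentiableAt

lemma diff_pdt (hf : ContDiffAt ℝ 2 f x) : DifferentiableAt ℝ (pdt f) x :=
  (hasFDerivAt_pd hf (0,1)).differentiableAt

lemma pd_swap (hf : ContDiffAt ℝ 2 f x) : pdt (pdx f) x = pdx (pdt f) x := by
  have hs := hf.isSymmSndFDerivAt (by simp)
  have h1 := (hasFDerivAt_pd hf (1,0)).fderiv
  have h2 := (hasFDerivAt_pd hf (0,1)).fderiv
  have e1 : pdt (pdx f) x = fderiv ℝ (fderiv ℝ f) x (0,1) (1,0) := by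
    show fderiv ℝ (fun y => fderiv ℝ f y (1,0)) x (0,1) = _
    rw [h1]; rfl
  have e2 : pdx (pdt f) x = fderiv ℝ (fderiv ℝ f) x (1,0) (0,1) := by
    show fderiv ℝ (fun y => fderiv ℝ f y (0,1)) x (1,0) = _
    rw [h2]; rfl
  rw [e1, e2, hs (0,1) (1,0)]

end helpers

theorem statement1
    (α γ : ℝ) (hα : 0 < α) (hγ : γ = 2 * α + 1)
    (I : Set ℝ) (hIopen : IsOpen I) (hIord : I.OrdConnected)
    (D : Set (ℝ × ℝ)) (hD : D = {p : ℝ × ℝ | p.2 ∈ I})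
    (w z k η : ℝ × ℝ → ℝ)
    (hw : ContDiffOn ℝ 2 w D) (hz : ContDiffOn ℝ 2 z D)
    (hk : ContDiffOn ℝ 2 k D) (hη : ContDiffOn ℝ 2 η D)
    (σ lam1 lam2 lam3 Wr Zr Kr : ℝ × ℝ → ℝ)
    (hσ : σ = fun p => (w p - z p) / 2)
    (hl1 : lam1 = fun p => (1 - α) / 2 * w p + (1 + α) / 2 * z p)
    (hl2 : lam2 = fun p => (w p + z p) / 2)
    (hl3 : lam3 = fun p => (1 + α) / 2 * w p + (1 - α) / 2 * z p)
    (hWr : Wr = fun p => pdx w p - 1 / (2 * γ) * σ p * pdx k p)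
    (hZr : Zr = fun p => pdx z p + 1 / (2 * γ) * σ p * pdx k p)
    (hKr : Kr = fun p => pdx k p)
    (heq1 : ∀ p ∈ D, pdt w p + lam3 p * pdx w p = α / (2 * γ) * σ p ^ 2 * pdx k p)
    (heq2 : ∀ p ∈ D, pdt z p + lam1 p * pdx z p = α / (2 * γ) * σ p ^ 2 * pdx k p)
    (heq3 : ∀ p ∈ D, pdt k p + lam2 p * pdx k p = 0)
    (hσpos : ∀ p ∈ D, 0 < σ p)
    (hηt : ∀ p ∈ D, pdt η p = lam3 (η p, p.2))
    (Sig W Z K ηx : ℝ × ℝ → ℝ)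
    (hSig : Sig = fun p => σ (η p, p.2))
    (hW : W = fun p => Wr (η p, p.2))
    (hZ : Z = fun p => Zr (η p, p.2))
    (hK : K = fun p => Kr (η p, p.2))
    (hηx : ηx = fun p => pdx η p) :
    ∀ p ∈ D,
      (pdt Sig p = -α * Sig p * Z p + α / (2 * γ) * Sig p ^ 2 * K p) ∧
      (pdx Sig p =
        1 / 2 * ηx p * W p - 1 / 2 * ηx p * Z p + 1 / (2 * γ) * ηx p * Sig p * K p) ∧
      (pdt (fun q => (Sig q)⁻¹) p = α * (Sig p)⁻¹ * Z p - α / (2 * γ) * K p) ∧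
      (pdt ηx p =
        (1 + α) / 2 * ηx p * W p + (1 - α) / 2 * ηx p * Z p
          + α / (2 * γ) * ηx p * Sig p * K p) ∧
      (pdt (fun q => ηx q * W q) p =
        α / (4 * γ) * Sig p * K p * (ηx p * W p + ηx p * Z p)) ∧
      (ηx p * pdt K p =
        α * Sig p * pdx K p - 1 / 2 * K p * (ηx p * W p) - 1 / 2 * ηx p * K p * Z p) ∧
      (ηx p * pdt Z p =
        2 * α * Sig p * pdx Z p - (1 - α) / 2 * (ηx p * W p) * Z p
          - α / (4 * γ) * Sig p * K p * (ηx p * W p) - (1 + α) / 2 * ηx p * Z p ^ 2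
          + α / (4 * γ) * ηx p * Sig p * K p * Z p) := by
  intro p hp
  have hγ0 : γ ≠ 0 := by rw [hγ]; nlinarith
  have hDopen : IsOpen D := by rw [hD]; exact hIopen.preimage continuous_snd
  have hpI : p.2 ∈ I := by rw [hD] at hp; exact hp
  have hYD : ((η p, p.2) : ℝ × ℝ) ∈ D := by rw [hD]; exact hpI
  -- smoothness at the point (η p, p.2) resp. p
  have hwA : ContDiffAt ℝ 2 w (η p, p.2) := hw.contDiffAt (hDopen.mem_nhds hYD)
  have hzA : ContDiffAt ℝ 2 z (η p, p.2) := hz.contDiffAt (hDopen.mem_nhds hYD)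
  have hkA : ContDiffAt ℝ 2 k (η p, p.2) := hk.contDiffAt (hDopen.mem_nhds hYD)
  have hηA : ContDiffAt ℝ 2 η p := hη.contDiffAt (hDopen.mem_nhds hp)
  have hwd : DifferentiableAt ℝ w (η p, p.2) := hwA.differentiableAt (by norm_num)
  have hzd : DifferentiableAt ℝ z (η p, p.2) := hzA.differentiableAt (by norm_num)
  have hkd : DifferentiableAt ℝ k (η p, p.2) := hkA.differentiableAt (by norm_num)
  have hηd : DifferentiableAt ℝ η p := hηA.differentiableAt (by norm_num)
  have hσd : DifferentiableAt ℝ σ (η p, p.2) := by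
    have h : (fun p => (w p - z p) / 2) = fun p => (2:ℝ)⁻¹ * (w p - z p) := by ext q; ring
    rw [hσ, h]; exact (hwd.sub hzd).const_mul _
  have hl1d : DifferentiableAt ℝ lam1 (η p, p.2) := by
    rw [hl1]; exact (hwd.const_mul _).add (hzd.const_mul _)
  have hl2d : DifferentiableAt ℝ lam2 (η p, p.2) := by
    have h : (fun p => (w p + z p) / 2) = fun p => (2:ℝ)⁻¹ * (w p + z p) := by ext q; ring
    rw [hl2, h]; exact (hwd.add hzd).const_mul _
  have hl3d : DifferentiableAt ℝ lam3 (η p, p.2) := by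
    rw [hl3]; exact (hwd.const_mul _).add (hzd.const_mul _)
  have hwxd : DifferentiableAt ℝ (pdx w) (η p, p.2) := diff_pdx hwA
  have hzxd : DifferentiableAt ℝ (pdx z) (η p, p.2) := diff_pdx hzA
  have hkxd : DifferentiableAt ℝ (pdx k) (η p, p.2) := diff_pdx hkA
  -- first derivatives of σ and the wave speeds
  have hσa : ∀ v : ℝ × ℝ, fderiv ℝ σ (η p, p.2) v
      = (fderiv ℝ w (η p, p.2) v - fderiv ℝ z (η p, p.2) v) / 2 := by
    intro v; rw [hσ, pd_div_const (hwd.fun_sub hzd) 2, pd_sub hwd hzd]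
  have hσx : pdx σ (η p, p.2) = (pdx w (η p, p.2) - pdx z (η p, p.2)) / 2 := hσa (1,0)
  have hσt : pdt σ (η p, p.2) = (pdt w (η p, p.2) - pdt z (η p, p.2)) / 2 := hσa (0,1)
  have hl1x : pdx lam1 (η p, p.2)
      = (1 - α) / 2 * pdx w (η p, p.2) + (1 + α) / 2 * pdx z (η p, p.2) := by
    show fderiv ℝ lam1 (η p, p.2) (1,0) = _
    rw [hl1, pd_add (hwd.const_mul _) (hzd.const_mul _), pd_const_mul hwd, pd_const_mul hzd]
    rfl
  have hl2x : pdx lam2 (η p, p.2) = (pdx w (η p, p.2) + pdx z (η p, p.2)) / 2 := by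
    show fderiv ℝ lam2 (η p, p.2) (1,0) = _
    rw [hl2, pd_div_const (hwd.fun_add hzd) 2, pd_add hwd hzd]
    rfl
  have hl3x : pdx lam3 (η p, p.2)
      = (1 + α) / 2 * pdx w (η p, p.2) + (1 - α) / 2 * pdx z (η p, p.2) := by
    show fderiv ℝ lam3 (η p, p.2) (1,0) = _
    rw [hl3, pd_add (hwd.const_mul _) (hzd.const_mul _), pd_const_mul hwd, pd_const_mul hzd]
    rfl
  -- pointwise values
  have hσv : σ (η p, p.2) = (w (η p, p.2) - z (η p, p.2)) / 2 := by rw [hσ]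
  have hl1v : lam1 (η p, p.2)
      = (1 - α) / 2 * w (η p, p.2) + (1 + α) / 2 * z (η p, p.2) := by rw [hl1]
  have hl2v : lam2 (η p, p.2) = (w (η p, p.2) + z (η p, p.2)) / 2 := by rw [hl2]
  have hl3v : lam3 (η p, p.2)
      = (1 + α) / 2 * w (η p, p.2) + (1 - α) / 2 * z (η p, p.2) := by rw [hl3]
  -- time derivatives from the PDE
  have hwt : pdt w (η p, p.2) = α / (2 * γ) * σ (η p, p.2) ^ 2 * pdx k (η p, p.2)
      - lam3 (η p, p.2) * pdx w (η p, p.2) := by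
    have h := heq1 (η p, p.2) hYD; linarith
  have hzt : pdt z (η p, p.2) = α / (2 * γ) * σ (η p, p.2) ^ 2 * pdx k (η p, p.2)
      - lam1 (η p, p.2) * pdx z (η p, p.2) := by
    have h := heq2 (η p, p.2) hYD; linarith
  have hkt : pdt k (η p, p.2) = -(lam2 (η p, p.2) * pdx k (η p, p.2)) := by
    have h := heq3 (η p, p.2) hYD; linarith
  -- mixed second partials via Schwarz and differentiating the PDE in space
  have hwxt : pdt (pdx w) (η p, p.2)
      = (α / (2 * γ) * (2 * σ (η p, p.2) * pdx σ (η p, p.2)) * pdx k (η p, p.2)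
          + α / (2 * γ) * σ (η p, p.2) ^ 2 * pdx (pdx k) (η p, p.2))
        - (pdx lam3 (η p, p.2) * pdx w (η p, p.2)
          + lam3 (η p, p.2) * pdx (pdx w) (η p, p.2)) := by
    have hev : pdt w =ᶠ[nhds (η p, p.2)]
        (fun q => α / (2 * γ) * σ q ^ 2 * pdx k q - lam3 q * pdx w q) := by
      filter_upwards [hDopen.mem_nhds hYD] with q hq
      have := heq1 q hq; linarith
    have h0 : pdt (pdx w) (η p, p.2) = pdx (pdt w) (η p, p.2) := pd_swap hwA
    have h1 : pdx (pdt w) (η p, p.2)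
        = pdx (fun q => α / (2 * γ) * σ q ^ 2 * pdx k q - lam3 q * pdx w q) (η p, p.2) := by
      show fderiv ℝ (pdt w) (η p, p.2) (1,0) = _
      rw [hev.fderiv_eq]; rfl
    rw [h0, h1]
    show fderiv ℝ _ (η p, p.2) (1,0) = _
    rw [pd_sub (((hσd.fun_pow 2).const_mul _).fun_mul hkxd) (hl3d.fun_mul hwxd),
        pd_mul ((hσd.fun_pow 2).const_mul _) hkxd,
        pd_const_mul (hσd.fun_pow 2) _, pd_sq hσd,
        pd_mul hl3d hwxd]
    simp only [pdx]
    all_goals ring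
  have hzxt : pdt (pdx z) (η p, p.2)
      = (α / (2 * γ) * (2 * σ (η p, p.2) * pdx σ (η p, p.2)) * pdx k (η p, p.2)
          + α / (2 * γ) * σ (η p, p.2) ^ 2 * pdx (pdx k) (η p, p.2))
        - (pdx lam1 (η p, p.2) * pdx z (η p, p.2)
          + lam1 (η p, p.2) * pdx (pdx z) (η p, p.2)) := by
    have hev : pdt z =ᶠ[nhds (η p, p.2)]
        (fun q => α / (2 * γ) * σ q ^ 2 * pdx k q - lam1 q * pdx z q) := by
      filter_upwards [hDopen.mem_nhds hYD] with q hq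
      have := heq2 q hq; linarith
    have h0 : pdt (pdx z) (η p, p.2) = pdx (pdt z) (η p, p.2) := pd_swap hzA
    have h1 : pdx (pdt z) (η p, p.2)
        = pdx (fun q => α / (2 * γ) * σ q ^ 2 * pdx k q - lam1 q * pdx z q) (η p, p.2) := by
      show fderiv ℝ (pdt z) (η p, p.2) (1,0) = _
      rw [hev.fderiv_eq]; rfl
    rw [h0, h1]
    show fderiv ℝ _ (η p, p.2) (1,0) = _
    rw [pd_sub (((hσd.fun_pow 2).const_mul _).fun_mul hkxd) (hl1d.fun_mul hzxd),
        pd_mul ((hσd.fun_pow 2).const_mul _) hkxd,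
        pd_const_mul (hσd.fun_pow 2) _, pd_sq hσd,
        pd_mul hl1d hzxd]
    simp only [pdx]
    all_goals ring
  have hkxt : pdt (pdx k) (η p, p.2)
      = -(pdx lam2 (η p, p.2) * pdx k (η p, p.2)
          + lam2 (η p, p.2) * pdx (pdx k) (η p, p.2)) := by
    have hev : pdt k =ᶠ[nhds (η p, p.2)] (fun q => -(lam2 q * pdx k q)) := by
      filter_upwards [hDopen.mem_nhds hYD] with q hq
      have := heq3 q hq; linarith
    have h0 : pdt (pdx k) (η p, p.2) = pdx (pdt k) (η p, p.2) := pd_swap hkA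
    have h1 : pdx (pdt k) (η p, p.2)
        = pdx (fun q => -(lam2 q * pdx k q)) (η p, p.2) := by
      show fderiv ℝ (pdt k) (η p, p.2) (1,0) = _
      rw [hev.fderiv_eq]; rfl
    rw [h0, h1]
    show fderiv ℝ _ (η p, p.2) (1,0) = _
    rw [pd_neg, pd_mul hl2d hkxd]
    simp only [pdx]
  -- derivatives of Wr, Zr
  have hWra : ∀ v : ℝ × ℝ, fderiv ℝ Wr (η p, p.2) v
      = fderiv ℝ (pdx w) (η p, p.2) v
        - (1 / (2 * γ) * fderiv ℝ σ (η p, p.2) v * pdx k (η p, p.2)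
          + 1 / (2 * γ) * σ (η p, p.2) * fderiv ℝ (pdx k) (η p, p.2) v) := by
    intro v
    rw [hWr, pd_sub hwxd ((hσd.const_mul _).fun_mul hkxd),
        pd_mul (hσd.const_mul _) hkxd, pd_const_mul hσd _]
  have hZra : ∀ v : ℝ × ℝ, fderiv ℝ Zr (η p, p.2) v
      = fderiv ℝ (pdx z) (η p, p.2) v
        + (1 / (2 * γ) * fderiv ℝ σ (η p, p.2) v * pdx k (η p, p.2)
          + 1 / (2 * γ) * σ (η p, p.2) * fderiv ℝ (pdx k) (η p, p.2) v) := by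
    intro v
    rw [hZr, pd_add hzxd ((hσd.const_mul _).fun_mul hkxd),
        pd_mul (hσd.const_mul _) hkxd, pd_const_mul hσd _]
  have hWrx : pdx Wr (η p, p.2)
      = pdx (pdx w) (η p, p.2)
        - (1 / (2 * γ) * pdx σ (η p, p.2) * pdx k (η p, p.2)
          + 1 / (2 * γ) * σ (η p, p.2) * pdx (pdx k) (η p, p.2)) := hWra (1,0)
  have hWrt : pdt Wr (η p, p.2)
      = pdt (pdx w) (η p, p.2)
        - (1 / (2 * γ) * pdt σ (η p, p.2) * pdx k (η p, p.2)
          + 1 / (2 * γ) * σ (η p, p.2) * pdt (pdx k) (η p, p.2)) := hWra (0,1)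
  have hZrx : pdx Zr (η p, p.2)
      = pdx (pdx z) (η p, p.2)
        + (1 / (2 * γ) * pdx σ (η p, p.2) * pdx k (η p, p.2)
          + 1 / (2 * γ) * σ (η p, p.2) * pdx (pdx k) (η p, p.2)) := hZra (1,0)
  have hZrt : pdt Zr (η p, p.2)
      = pdt (pdx z) (η p, p.2)
        + (1 / (2 * γ) * pdt σ (η p, p.2) * pdx k (η p, p.2)
          + 1 / (2 * γ) * σ (η p, p.2) * pdt (pdx k) (η p, p.2)) := hZra (0,1)
  have hKrf : Kr = pdx k := hKr
  -- differentiability of the Riemann variables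
  have hWrd : DifferentiableAt ℝ Wr (η p, p.2) := by
    rw [hWr]; exact hwxd.sub ((hσd.const_mul _).mul hkxd)
  have hZrd : DifferentiableAt ℝ Zr (η p, p.2) := by
    rw [hZr]; exact hzxd.add ((hσd.const_mul _).mul hkxd)
  -- chain rule for the composed quantities
  have hηt2 : pdt η p = lam3 (η p, p.2) := hηt p hp
  have hSigx : pdx Sig p = pdx σ (η p, p.2) * pdx η p := by
    rw [hSig]; exact pdx_comp2 hσd hηd
  have hSigt : pdt Sig p = pdx σ (η p, p.2) * lam3 (η p, p.2) + pdt σ (η p, p.2) := by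
    rw [hSig, pdt_comp2 hσd hηd, hηt2]
  have hWx : pdx W p = pdx Wr (η p, p.2) * pdx η p := by
    rw [hW]; exact pdx_comp2 hWrd hηd
  have hWt : pdt W p = pdx Wr (η p, p.2) * lam3 (η p, p.2) + pdt Wr (η p, p.2) := by
    rw [hW, pdt_comp2 hWrd hηd, hηt2]
  have hZx : pdx Z p = pdx Zr (η p, p.2) * pdx η p := by
    rw [hZ]; exact pdx_comp2 hZrd hηd
  have hZt : pdt Z p = pdx Zr (η p, p.2) * lam3 (η p, p.2) + pdt Zr (η p, p.2) := by
    rw [hZ, pdt_comp2 hZrd hηd, hηt2]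
  have hKx : pdx K p = pdx (pdx k) (η p, p.2) * pdx η p := by
    rw [hK, hKrf]; exact pdx_comp2 hkxd hηd
  have hKt : pdt K p = pdx (pdx k) (η p, p.2) * lam3 (η p, p.2) + pdt (pdx k) (η p, p.2) := by
    rw [hK, hKrf, pdt_comp2 hkxd hηd, hηt2]
  -- point values of the composed quantities
  have hSigp : Sig p = σ (η p, p.2) := by rw [hSig]
  have hWp : W p = pdx w (η p, p.2)
      - 1 / (2 * γ) * σ (η p, p.2) * pdx k (η p, p.2) := by rw [hW, hWr]
  have hZp : Z p = pdx z (η p, p.2)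
      + 1 / (2 * γ) * σ (η p, p.2) * pdx k (η p, p.2) := by rw [hZ, hZr]
  have hKp : K p = pdx k (η p, p.2) := by rw [hK, hKr]
  have hexp : ηx p = pdx η p := by rw [hηx]
  -- derivative of ηx
  have hηxt : pdt ηx p = pdx lam3 (η p, p.2) * pdx η p := by
    have hev : pdt η =ᶠ[nhds p] (fun q => lam3 (η q, q.2)) := by
      filter_upwards [hDopen.mem_nhds hp] with q hq
      exact hηt q hq
    have h0 : pdt ηx p = pdt (pdx η) p := by rw [hηx]
    have h1 : pdt (pdx η) p = pdx (pdt η) p := pd_swap hηA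
    have h2 : pdx (pdt η) p = pdx (fun q => lam3 (η q, q.2)) p := by
      simp only [pdx]; rw [hev.fderiv_eq]
    have h3 : pdx (fun q => lam3 (η q, q.2)) p = pdx lam3 (η p, p.2) * pdx η p :=
      pdx_comp2 hl3d hηd
    rw [h0, h1, h2, h3]
  -- inverse
  have hSigd : DifferentiableAt ℝ Sig p := by rw [hSig]; exact diff_comp2 hσd hηd
  have hspos : 0 < σ (η p, p.2) := hσpos _ hYD
  have hSigne : Sig p ≠ 0 := by rw [hSigp]; exact ne_of_gt hspos
  have hInvt : pdt (fun q => (Sig q)⁻¹) p = -((Sig p) ^ 2)⁻¹ * pdt Sig p := by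
    have hinv : HasDerivAt (fun y : ℝ => y⁻¹) (-((Sig p) ^ 2)⁻¹) (Sig p) := hasDerivAt_inv hSigne
    have h := (hinv.hasFDerivAt.comp p hSigd.hasFDerivAt).fderiv
    show fderiv ℝ ((fun y : ℝ => y⁻¹) ∘ Sig) p (0,1) = _
    rw [h]
    simp only [ContinuousLinearMap.coe_comp', Function.comp_apply,
      ContinuousLinearMap.smulRight_apply, ContinuousLinearMap.one_apply, smul_eq_mul, pdt,
      ContinuousLinearMap.toSpanSingleton_apply]
    ring
  -- product ηx * W
  have hηxd : DifferentiableAt ℝ ηx p := by rw [hηx]; exact diff_pdx hηA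
  have hWd : DifferentiableAt ℝ W p := by rw [hW]; exact diff_comp2 hWrd hηd
  have hMul : pdt (fun q => ηx q * W q) p = pdt ηx p * W p + ηx p * pdt W p :=
    pd_mul hηxd hWd
  -- nonvanishing for field_simp
  have hne : w (η p, p.2) - z (η p, p.2) ≠ 0 := by
    rw [hσv] at hspos; intro h; rw [h] at hspos; norm_num at hspos
  refine ⟨?_, ?_, ?_, ?_, ?_, ?_, ?_⟩
  · simp only [hMul, hInvt, hηxt, hSigt, hSigx, hWt, hWx, hZt, hZx, hKt, hKx, hWrx, hWrt, hZrx, hZrt, hwxt, hzxt, hkxt, hσx, hσt, hwt, hzt, hkt, hl1x, hl2x, hl3x, hl1v, hl2v, hl3v, hσv, hexp, hWp, hZp, hKp, hSigp]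
    field_simp
    ring
  · simp only [hMul, hInvt, hηxt, hSigt, hSigx, hWt, hWx, hZt, hZx, hKt, hKx, hWrx, hWrt, hZrx, hZrt, hwxt, hzxt, hkxt, hσx, hσt, hwt, hzt, hkt, hl1x, hl2x, hl3x, hl1v, hl2v, hl3v, hσv, hexp, hWp, hZp, hKp, hSigp]
    field_simp
    ring
  · simp only [hMul, hInvt, hηxt, hSigt, hSigx, hWt, hWx, hZt, hZx, hKt, hKx, hWrx, hWrt, hZrx, hZrt, hwxt, hzxt, hkxt, hσx, hσt, hwt, hzt, hkt, hl1x, hl2x, hl3x, hl1v, hl2v, hl3v, hσv, hexp, hWp, hZp, hKp, hSigp]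
    field_simp
    ring
  · simp only [hMul, hInvt, hηxt, hSigt, hSigx, hWt, hWx, hZt, hZx, hKt, hKx, hWrx, hWrt, hZrx, hZrt, hwxt, hzxt, hkxt, hσx, hσt, hwt, hzt, hkt, hl1x, hl2x, hl3x, hl1v, hl2v, hl3v, hσv, hexp, hWp, hZp, hKp, hSigp]
    field_simp
    ring
  · simp only [hMul, hInvt, hηxt, hSigt, hSigx, hWt, hWx, hZt, hZx, hKt, hKx, hWrx, hWrt, hZrx, hZrt, hwxt, hzxt, hkxt, hσx, hσt, hwt, hzt, hkt, hl1x, hl2x, hl3x, hl1v, hl2v, hl3v, hσv, hexp, hWp, hZp, hKp, hSigp]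
    field_simp
    ring
  · simp only [hMul, hInvt, hηxt, hSigt, hSigx, hWt, hWx, hZt, hZx, hKt, hKx, hWrx, hWrt, hZrx, hZrt, hwxt, hzxt, hkxt, hσx, hσt, hwt, hzt, hkt, hl1x, hl2x, hl3x, hl1v, hl2v, hl3v, hσv, hexp, hWp, hZp, hKp, hSigp]
    field_simp
    ring
  · simp only [hMul, hInvt, hηxt, hSigt, hSigx, hWt, hWx, hZt, hZx, hKt, hKx, hWrx, hWrt, hZrx, hZrt, hwxt, hzxt, hkxt, hσx, hσt, hwt, hzt, hkt, hl1x, hl2x, hl3x, hl1v, hl2v, hl3v, hσv, hexp, hWp, hZp, hKp, hSigp]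
    field_simp
    ring
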